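/- arXiv:1004.0160 — 2 statements merged into one kernel-verified Lean document; each statement's English description precedes it below -/
import Mathlib

section
/- Let V be a commutative, integral (k = ⊤), completely distributive quantale. Then the map ξ : U(V) → V from ultrafilters on V to V given by ξ(𝔵) = ⋀_{A ∈ 𝔵} ⋁ A is monotone with respect to the order on ultrafilters induced by 𝔵 ≤ 𝔶 iff every upward-closed set in 𝔵 is in 𝔶, and satisfies ξ(ė(v)) = v for the principal ultrafilter ė(v) at v. -/
/-- `ξ(𝔵) = ⋀_{A ∈ 𝔵} ⋁ A` for an ultrafilter `𝔵` on a complete lattice. -/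
noncomputable def xi {V : Type u} [CompleteLattice V] (𝔵 : Ultrafilter V) : V :=
  ⨅ A ∈ 𝔵, sSup A

/-- `u` is totally below `w`. -/
def TotallyBelow {V : Type u} [CompleteLattice V] (u w : V) : Prop :=
  ∀ S : Set V, w ≤ sSup S → ∃ s ∈ S, u ≤ s

/-- For a commutative, integral (`k = ⊤`), completely distributive quantale `V`, the map
`ξ : U(V) → V`, `ξ(𝔵) = ⋀_{A ∈ 𝔵} ⋁ A`, is monotone for the order `𝔵 ≤ 𝔶` iff every
upward-closed set in `𝔵` is in `𝔶`, and `ξ(ė(v)) = v` for principal ultrafilters. -/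
theorem stmt15 {V : Type u} [CompleteLattice V] [CommMonoid V]
    (hd : ∀ (x : V) (S : Set V), x * sSup S = ⨆ s ∈ S, x * s)
    (hk : (1 : V) = ⊤)
    (hcd : ∀ w : V, w = sSup {u | TotallyBelow u w}) :
    (∀ 𝔵 𝔶 : Ultrafilter V, (∀ A ∈ 𝔵, IsUpperSet A → A ∈ 𝔶) → xi 𝔵 ≤ xi 𝔶) ∧
    (∀ v : V, xi (pure v : Ultrafilter V) = v) := by
  constructor
  · intro 𝔵 𝔶 h
    -- it suffices to show xi 𝔵 ≤ sSup B for every B ∈ 𝔶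
    refine le_iInf₂ fun B hB => ?_
    rw [hcd (xi 𝔵)]
    refine sSup_le fun u hu => ?_
    -- the upper set {w | u ≤ w} belongs to 𝔵
    have hA : {w : V | u ≤ w} ∈ 𝔵 := by
      by_contra hA
      have hc : {w : V | u ≤ w}ᶜ ∈ 𝔵 := (Ultrafilter.compl_mem_iff_notMem).2 hA
      have hle : xi 𝔵 ≤ sSup ({w : V | u ≤ w}ᶜ) := biInf_le sSup hc
      obtain ⟨s, hs, hus⟩ := hu _ hle
      exact hs hus
    have hA𝔶 : {w : V | u ≤ w} ∈ 𝔶 := h _ hA (fun a b hab ha => le_trans ha hab)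
    obtain ⟨w, hw1, hw2⟩ := Ultrafilter.nonempty_of_mem (Filter.inter_mem hA𝔶 hB)
    exact le_trans hw1 (le_sSup hw2)
  · intro v
    apply le_antisymm
    · exact biInf_le sSup (show ({v} : Set V) ∈ (pure v : Ultrafilter V) from rfl) |>.trans (by simp)
    · exact le_iInf₂ fun A hA => le_sSup hA
end

section
/- Let X be a topological space and φ : X → 2 the characteristic map of the complement of a subset, so that φ corresponds to a closed subset A ⊆ X viewed as a distributor X ⇸ E to the one-point space. Then φ is a right adjoint distributor if and only if A is a nonempty irreducible closed subset; and φ = x^* (the distributor represented by a point x) if and only if A is the closure of {x}. Consequently, every such right adjoint is representable by a point iff X is (weakly) sober. -/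
open Filter Topology

variable {X : Type u} [TopologicalSpace X]

/-- The lax extension of the ultrafilter functor (for `V = 2`) applied to the convergence
matrix of a topological space. -/
def UextConv (𝔛 : Ultrafilter (Ultrafilter X)) (𝔵 : Ultrafilter X) : Prop :=
  ∃ 𝔴 : Ultrafilter (Ultrafilter X × X),
    𝔴.map Prod.fst = 𝔛 ∧ 𝔴.map Prod.snd = 𝔵 ∧
    {p : Ultrafilter X × X | ↑p.1 ≤ 𝓝 p.2} ∈ 𝔴

/-- `ψ : E ⇸ X` is a distributor: `a ∘ ψ ≤ ψ` for the Kleisli convolution. -/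
def PsiDistrib (ψ : Ultrafilter X → Prop) : Prop :=
  ∀ 𝔛 : Ultrafilter (Ultrafilter X),
    (∃ 𝔶, UextConv 𝔛 𝔶 ∧ ψ 𝔶) → ψ (𝔛.bind id)

/-- The distributor `X ⇸ E` given by the (closed) set `A` is a right adjoint: there is a
distributor `ψ : E ⇸ X` with `id_E ≤ φ ∘ ψ` and `ψ ∘ φ ≤ a` (Kleisli convolution). -/
def IsRightAdjointDistrib (A : Set X) : Prop :=
  ∃ ψ : Ultrafilter X → Prop,
    PsiDistrib ψ ∧
    (∃ 𝔵 : Ultrafilter X, ψ 𝔵 ∧ A ∈ 𝔵) ∧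
    (∀ (𝔛 : Ultrafilter (Ultrafilter X)) (x : X),
      {𝔶 : Ultrafilter X | ψ 𝔶} ∈ 𝔛 → x ∈ A → ↑(𝔛.bind id) ≤ 𝓝 x)

theorem key_aux (A : Set X) (hA : IsClosed A) :
    IsRightAdjointDistrib A ↔
      (A.Nonempty ∧ ∀ B C : Set X, IsClosed B → IsClosed C → A ⊆ B ∪ C → A ⊆ B ∨ A ⊆ C) := by
  constructor
  · rintro ⟨ψ, -, ⟨𝔵, hψ𝔵, hA𝔵⟩, hconv⟩
    have hx : ∀ x ∈ A, ↑𝔵 ≤ 𝓝 x := by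
      intro x hxA
      have h1 : {𝔶 : Ultrafilter X | ψ 𝔶} ∈ (pure 𝔵 : Ultrafilter (Ultrafilter X)) := hψ𝔵
      have h2 := hconv (pure 𝔵) x h1 hxA
      have h3 : (pure 𝔵 : Ultrafilter (Ultrafilter X)).bind id = 𝔵 := pure_bind 𝔵 id
      rwa [h3] at h2
    refine ⟨𝔵.nonempty_of_mem hA𝔵, fun B C hB hC hsub => ?_⟩
    have hBC : B ∪ C ∈ 𝔵 := Filter.mem_of_superset hA𝔵 hsub
    rcases (Ultrafilter.union_mem_iff).mp hBC with hB' | hC'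
    · left
      intro x hxA
      have : x ∈ closure B := mem_closure_iff_ultrafilter.mpr ⟨𝔵, hB', hx x hxA⟩
      rwa [hB.closure_eq] at this
    · right
      intro x hxA
      have : x ∈ closure C := mem_closure_iff_ultrafilter.mpr ⟨𝔵, hC', hx x hxA⟩
      rwa [hC.closure_eq] at this
  · rintro ⟨hne, hirr⟩
    -- opens meeting A pairwise intersect within A
    have hpre : ∀ U V : Set X, IsOpen U → IsOpen V → (U ∩ A).Nonempty →
        (V ∩ A).Nonempty → (U ∩ V ∩ A).Nonempty := by
      intro U V hU hV hUA hVA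
      by_contra h
      have hsub : A ⊆ Uᶜ ∪ Vᶜ := by
        intro x hxA
        by_contra hx
        simp only [Set.mem_union, Set.mem_compl_iff, not_or, not_not] at hx
        exact h ⟨x, ⟨hx.1, hx.2⟩, hxA⟩
      rcases hirr Uᶜ Vᶜ hU.isClosed_compl hV.isClosed_compl hsub with hs | hs
      · obtain ⟨x, hxU, hxA⟩ := hUA; exact hs hxA hxU
      · obtain ⟨x, hxV, hxA⟩ := hVA; exact hs hxA hxV
    set ψ : Ultrafilter X → Prop :=
      fun 𝔶 => ∀ U : Set X, IsOpen U → (U ∩ A).Nonempty → U ∈ 𝔶 with hψ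
    -- construct an ultrafilter containing A and all opens meeting A
    obtain ⟨𝔵, h𝔵⟩ : ∃ 𝔵 : Ultrafilter X, ψ 𝔵 ∧ A ∈ 𝔵 := by
      let ι := {U : Set X // IsOpen U ∧ (U ∩ A).Nonempty}
      have hι : Nonempty ι := ⟨⟨Set.univ, isOpen_univ, by simpa using hne⟩⟩
      let F : Filter X := ⨅ U : ι, 𝓟 (A ∩ U.1)
      have hdir : Directed (· ≥ ·) fun U : ι => 𝓟 (A ∩ U.1) := by
        rintro ⟨U, hU, hUA⟩ ⟨V, hV, hVA⟩
        refine ⟨⟨U ∩ V, hU.inter hV, hpre U V hU hV hUA hVA⟩, ?_, ?_⟩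
        · exact Filter.principal_mono.mpr fun x hx => ⟨hx.1, hx.2.1⟩
        · exact Filter.principal_mono.mpr fun x hx => ⟨hx.1, hx.2.2⟩
      have : Nonempty X := ⟨hne.some⟩
      have hF : F.NeBot := by
        refine Filter.iInf_neBot_of_directed hdir ?_
        rintro ⟨U, hU, hUA⟩
        rw [Filter.principal_neBot_iff]
        obtain ⟨x, hxU, hxA⟩ := hUA
        exact ⟨x, hxA, hxU⟩
      obtain ⟨𝔵, h𝔵F⟩ := Filter.exists_ultrafilter_le F
      refine ⟨𝔵, ?_, ?_⟩
      · intro U hU hUA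
        have : A ∩ U ∈ F := Filter.mem_iInf_of_mem ⟨U, hU, hUA⟩ (Filter.mem_principal_self _)
        exact Filter.mem_of_superset (h𝔵F this) fun x hx => hx.2
      · have : A ∩ (Set.univ : Set X) ∈ F :=
          Filter.mem_iInf_of_mem ⟨Set.univ, isOpen_univ, by simpa using hne⟩
            (Filter.mem_principal_self _)
        exact Filter.mem_of_superset (h𝔵F this) fun x hx => hx.1
    refine ⟨ψ, ?_, ⟨𝔵, h𝔵.1, h𝔵.2⟩, ?_⟩
    · -- PsiDistrib
      rintro 𝔛 ⟨𝔶, ⟨𝔴, hfst, hsnd, hconv⟩, hψ𝔶⟩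
      intro U hU hUA
      have hU𝔶 : U ∈ 𝔶 := hψ𝔶 U hU hUA
      have h1 : {p : Ultrafilter X × X | p.2 ∈ U} ∈ 𝔴 := by
        rw [← hsnd] at hU𝔶; exact hU𝔶
      have h2 : {p : Ultrafilter X × X | U ∈ p.1} ∈ 𝔴 := by
        filter_upwards [h1, hconv] with p hpU hple
        exact hple (hU.mem_nhds hpU)
      have h3 : {𝔷 : Ultrafilter X | U ∈ 𝔷} ∈ 𝔛 := by
        rw [← hfst]; exact h2
      exact h3
    · -- convergence
      intro 𝔛 x h𝔛 hxA
      intro s hs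
      rw [mem_nhds_iff] at hs
      obtain ⟨t, hts, ht, hxt⟩ := hs
      have : {𝔶 : Ultrafilter X | t ∈ 𝔶} ∈ 𝔛 := by
        filter_upwards [h𝔛] with 𝔶 h𝔶
        exact h𝔶 t ht ⟨x, hxt, hxA⟩
      have htmem : t ∈ 𝔛.bind id := this
      exact Filter.mem_of_superset htmem hts

/-- A distributor `φ : X ⇸ E`, i.e. a closed set `A`, is right adjoint iff `A` is nonempty
and irreducible; `φ = x^*` iff `A = closure {x}`; consequently every right adjoint is
representable by a point iff `X` is weakly sober. -/
theorem stmt18 (A : Set X) (hA : IsClosed A) :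
    (IsRightAdjointDistrib A ↔
      (A.Nonempty ∧ ∀ B C : Set X, IsClosed B → IsClosed C → A ⊆ B ∪ C → A ⊆ B ∨ A ⊆ C)) ∧
    (∀ x : X, ((fun x' => x' ∈ A) = fun x' => x' ∈ closure ({x} : Set X)) ↔
      A = closure ({x} : Set X)) ∧
    ((∀ A' : Set X, IsClosed A' → A'.Nonempty →
        (∀ B C : Set X, IsClosed B → IsClosed C → A' ⊆ B ∪ C → A' ⊆ B ∨ A' ⊆ C) →
        ∃ x : X, A' = closure ({x} : Set X)) ↔
      (∀ A' : Set X, IsClosed A' → IsRightAdjointDistrib A' →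
        ∃ x : X, A' = closure ({x} : Set X))) := by
  refine ⟨key_aux A hA, fun x => ?_, ?_⟩
  · constructor
    · intro h
      ext y
      exact iff_of_eq (congrFun h y)
    · intro h
      funext y
      rw [h]
  · constructor
    · intro h A' hA' hra
      obtain ⟨hne, hirr⟩ := (key_aux A' hA').mp hra
      exact h A' hA' hne hirr
    · intro h A' hA' hne hirr
      exact h A' hA' ((key_aux A' hA').mpr ⟨hne, hirr⟩)
end
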